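/- arXiv:1708.06253 — 4 statements merged into one kernel-verified Lean document; each statement's English description precedes it below -/
import Mathlib

section
/- Let (X,σ) be a subshift, let R ∈ ℕ ∪ {0}, and let φ,ψ ∈ Aut_R(X). Suppose w ∈ L(X) extends uniquely 2R times to the right and left, and let w̃ ∈ L(X) be the unique word of length |w| + 4R obtained by this extension. If φ(w̃) = ψ(w̃) (as words, applying the range-R block codes), then φ^{-1}∘ψ preserves occurrences of w̃. -/
open Filter Topology Pointwise

section Defs

variable {A : Type*}

/-- The left shift on bi-infinite sequences over `A`. -/
def shift (x : ℤ → A) : ℤ → A := fun i => x (i + 1)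

/-- The word `w` occurs in `x` at position `j`. -/
def OccursAt {n : ℕ} (x : ℤ → A) (w : Fin n → A) (j : ℤ) : Prop :=
  ∀ i : Fin n, x (j + (i : ℤ)) = w i

/-- The word `w` belongs to the language of `X`. -/
def InLanguage (X : Set (ℤ → A)) {n : ℕ} (w : Fin n → A) : Prop :=
  ∃ x ∈ X, OccursAt x w 0

/-- The complexity function of `X`: the number of words of length `n` in the language. -/
noncomputable def complexity (X : Set (ℤ → A)) (n : ℕ) : ℕ :=
  {w : Fin n → A | InLanguage X w}.ncard

/-- `x` is aperiodic: no positive shift fixes it. -/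
def IsAperiodic (x : ℤ → A) : Prop := ∀ p : ℤ, 0 < p → (fun i => x (i + p)) ≠ x

/-- The subshift obtained from `X` by forbidding the word `w`. -/
def Forbid (X : Set (ℤ → A)) {n : ℕ} (w : Fin n → A) : Set (ℤ → A) :=
  {x ∈ X | ∀ j : ℤ, ¬ OccursAt x w j}

/-- `w` extends uniquely `L` times to the right and left in the language of `X`. -/
def ExtendsUniquely (X : Set (ℤ → A)) {n : ℕ} (w : Fin n → A) (L : ℕ) : Prop :=
  ∃! u : Fin (n + 2 * L) → A,
    InLanguage X u ∧ ∀ i : Fin n, u ⟨L + (i : ℕ), by have := i.isLt; omega⟩ = w i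

variable [TopologicalSpace A]

/-- The automorphism group of a subshift `X`: permutations of `X` which are homeomorphisms
and commute with the shift. -/
def Aut (X : Set (ℤ → A)) : Subgroup (Equiv.Perm ↥X) where
  carrier := {φ | Continuous ⇑φ ∧ Continuous ⇑φ.symm ∧
    (∀ x y : ↥X, shift (x : ℤ → A) = (y : ℤ → A) →
      shift ((φ x : ℤ → A)) = ((φ y : ℤ → A))) ∧
    (∀ x y : ↥X, shift (x : ℤ → A) = (y : ℤ → A) →
      shift ((φ.symm x : ℤ → A)) = ((φ.symm y : ℤ → A)))}
  one_mem' := ⟨continuous_id, continuous_id, fun _ _ h => h, fun _ _ h => h⟩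
  mul_mem' := by
    rintro a b ⟨hac, hac', haσ, haσ'⟩ ⟨hbc, hbc', hbσ, hbσ'⟩
    refine ⟨?_, ?_, ?_, ?_⟩
    · simpa using hac.comp hbc
    · simpa [Equiv.Perm.mul_def] using hbc'.comp hac'
    · intro x y h
      simpa using haσ _ _ (hbσ x y h)
    · intro x y h
      simpa [Equiv.Perm.mul_def] using hbσ' _ _ (haσ' x y h)
  inv_mem' := by
    rintro a ⟨hac, hac', haσ, haσ'⟩
    exact ⟨hac', by simpa [Equiv.Perm.inv_def] using hac, fun x y h => haσ' x y h,
      fun x y h => by simpa [Equiv.Perm.inv_def] using haσ x y h⟩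

/-- `f` is a block code of range `R` representing `φ`. -/
def IsBlockCode (X : Set (ℤ → A)) (R : ℕ) (φ : Equiv.Perm ↥X)
    (f : (Fin (2 * R + 1) → A) → A) : Prop :=
  ∀ (x : ↥X) (i : ℤ), (φ x : ℤ → A) i = f (fun j => (x : ℤ → A) (i + (j : ℤ) - R))

/-- `Aut_R(X)`: automorphisms such that both they and their inverses are given by
sliding block codes of range `R`. -/
def AutR (X : Set (ℤ → A)) (R : ℕ) : Set (Equiv.Perm ↥X) :=
  {φ | φ ∈ Aut X ∧ (∃ f, IsBlockCode X R φ f) ∧ (∃ g, IsBlockCode X R φ⁻¹ g)}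

end Defs

/-- Apply a block code of range `R` to a word, shortening it by `2R`. -/
def applyCode {A : Type*} {R n : ℕ} (f : (Fin (2 * R + 1) → A) → A) (w : Fin n → A) :
    Fin (n - 2 * R) → A :=
  fun i => f (fun j => w ⟨(i : ℕ) + (j : ℕ), by have := i.isLt; have := j.isLt; omega⟩)

section Defs2

variable {A : Type*} [TopologicalSpace A]

/-- `φ` preserves occurrences of `v`. -/
def PreservesOcc (X : Set (ℤ → A)) (φ : Equiv.Perm ↥X) {n : ℕ} (v : Fin n → A) : Prop :=
  ∀ x : ↥X, OccursAt (x : ℤ → A) v 0 → OccursAt ((φ x : ℤ → A)) v 0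

/-- `φ` preserves occurrences of `v` which are at least `D` units away from any occurrence of
the words `u 0, …, u (i-1)`. -/
def PreservesOccAway (X : Set (ℤ → A)) (φ : Equiv.Perm ↥X) {n : ℕ} (v : Fin n → A)
    (D : ℕ) (ml : ℕ → ℕ) (u : ∀ t, Fin (ml t) → A) (i : ℕ) : Prop :=
  ∀ x : ↥X, OccursAt (x : ℤ → A) v 0 →
    (∀ t < i, ∀ p : ℤ, -(D : ℤ) ≤ p → p + ml t ≤ n + D → ¬ OccursAt (x : ℤ → A) (u t) p) →
    OccursAt ((φ x : ℤ → A)) v 0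

end Defs2

/-- A countable discrete group is amenable if it admits a Følner sequence. -/
def FolnerAmenable (G : Type*) [Group G] : Prop :=
  ∃ F : ℕ → Set G, (∀ k, (F k).Finite) ∧
    (∀ g : G, ∀ᶠ k in atTop, g ∈ F k) ∧
    ∀ g : G, Tendsto (fun k => ((symmDiff (g • F k) (F k)).ncard : ℝ) / ((F k).ncard : ℝ))
      atTop (𝓝 0)

/-- **Lemma 2.1.** Let `R ∈ ℕ ∪ {0}` and `φ, ψ ∈ Aut_R(X)`.  Suppose `w ∈ L(X)` extends
uniquely `2R` times to the right and left, with (unique) extension `w̃` of length `|w| + 4R`.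
If `φ(w̃) = ψ(w̃)` (applying the range-`R` block codes), then `φ⁻¹ ∘ ψ` preserves
occurrences of `w̃`. -/
theorem preservesOcc_of_eq_on_extension {A : Type*} [Fintype A] [TopologicalSpace A]
    [DiscreteTopology A] (X : Set (ℤ → A))
    (hX_ne : X.Nonempty) (hX_cl : IsClosed X) (hX_inv : shift '' X = X)
    (R : ℕ) {n : ℕ} (w : Fin n → A) (hw : InLanguage X w)
    (hext : ExtendsUniquely X w (2 * R))
    (wt : Fin (n + 2 * (2 * R)) → A) (hwtL : InLanguage X wt)
    (hwt : ∀ i : Fin n, wt ⟨2 * R + (i : ℕ), by have := i.isLt; omega⟩ = w i)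
    (φ ψ : Equiv.Perm ↥X)
    (f : (Fin (2 * R + 1) → A) → A) (hf : IsBlockCode X R φ f)
    (hfinv : ∃ f', IsBlockCode X R φ⁻¹ f') (hφ : φ ∈ Aut X)
    (g : (Fin (2 * R + 1) → A) → A) (hg : IsBlockCode X R ψ g)
    (hginv : ∃ g', IsBlockCode X R ψ⁻¹ g') (hψ : ψ ∈ Aut X)
    (heq : applyCode f wt = applyCode g wt) :
    PreservesOcc X (φ⁻¹ * ψ) wt := by
  obtain ⟨f', hf'⟩ := hfinv
  intro x hx
  set y : ↥X := (φ⁻¹ * ψ) x with hy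
  have hxv : ∀ k : ℕ, ∀ hk : k < n + 2 * (2 * R), (x : ℤ → A) k = wt ⟨k, hk⟩ := by
    intro k hk
    have := hx ⟨k, hk⟩
    simpa using this
  have h1 : ∀ i : ℕ, i < n + 2 * R →
      (φ x : ℤ → A) ((R : ℤ) + i) = (ψ x : ℤ → A) ((R : ℤ) + i) := by
    intro i hi
    have hfe : (φ x : ℤ → A) ((R : ℤ) + i) =
        applyCode f wt ⟨i, by omega⟩ := by
      rw [hf x ((R : ℤ) + i)]
      unfold applyCode
      congr 1
      funext j
      have hj := j.isLt
      have hc : ((R : ℤ) + i + (j : ℕ) - R) = ((i + (j : ℕ) : ℕ) : ℤ) := by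
        push_cast; ring
      rw [hc, hxv (i + (j : ℕ)) (by omega)]
    have hge : (ψ x : ℤ → A) ((R : ℤ) + i) =
        applyCode g wt ⟨i, by omega⟩ := by
      rw [hg x ((R : ℤ) + i)]
      unfold applyCode
      congr 1
      funext j
      have hj := j.isLt
      have hc : ((R : ℤ) + i + (j : ℕ) - R) = ((i + (j : ℕ) : ℕ) : ℤ) := by
        push_cast; ring
      rw [hc, hxv (i + (j : ℕ)) (by omega)]
    rw [hfe, hge, heq]
  have h2 : ∀ p : ℕ, 2 * R ≤ p → p < 2 * R + n →
      (y : ℤ → A) p = (x : ℤ → A) p := by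
    intro p hp1 hp2
    have hy1 : (y : ℤ → A) p = f' (fun j => (ψ x : ℤ → A) ((p : ℤ) + (j : ℕ) - R)) := by
      have := hf' (ψ x) p
      simpa [hy, Equiv.Perm.mul_apply] using this
    have hx1 : (x : ℤ → A) p = f' (fun j => (φ x : ℤ → A) ((p : ℤ) + (j : ℕ) - R)) := by
      have := hf' (φ x) p
      simpa using this
    rw [hy1, hx1]
    congr 1
    funext j
    have hj := j.isLt
    have hc : ((p : ℤ) + (j : ℕ) - R) = ((R : ℤ) + ((p + (j : ℕ) - 2 * R : ℕ) : ℤ)) := by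
      have : (((p + (j : ℕ) - 2 * R : ℕ)) : ℤ) = (p : ℤ) + (j : ℕ) - 2 * R := by
        push_cast [Nat.cast_sub (by omega : 2 * R ≤ p + (j : ℕ))]; ring
      rw [this]; ring
    rw [hc, h1 (p + (j : ℕ) - 2 * R) (by omega)]
  -- identify the word of y at position 0 with wt via unique extension
  obtain ⟨v, hv, huniq⟩ := hext
  set u : Fin (n + 2 * (2 * R)) → A := fun i => (y : ℤ → A) (i : ℕ) with hu
  have hwt_eq : wt = v := huniq wt ⟨hwtL, hwt⟩
  have hu_eq : u = v := by
    apply huniq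
    constructor
    · exact ⟨(y : ℤ → A), y.2, fun i => by simp [hu]⟩
    · intro i
      have hil := i.isLt
      have h2' := h2 (2 * R + (i : ℕ)) (by omega) (by omega)
      have hx' := hxv (2 * R + (i : ℕ)) (by omega)
      simp only [hu]
      push_cast at h2' hx' ⊢
      rw [h2', hx', hwt i]
  have hfin : u = wt := hu_eq.trans hwt_eq.symm
  intro i
  have := congrFun hfin i
  simp only [hu] at this
  simpa using this
end

section
/- Let (X,σ) be a subshift and w ∈ L(X). If the cylinder set [w]₀⁺ ∩ X contains at least one aperiodic point, then for all n ≥ |w| we have P_{X(w)}(n) ≤ P_X(n) − (n − |w| + 1), where X(w) is the subshift of X obtained by forbidding the word w. -/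
open Filter Topology Pointwise

namespace Lem31

variable {A : Type*}

/-- The window of `x` of length `k` starting at `a`. -/
def win (x : ℤ → A) (a : ℤ) (k : ℕ) : Fin k → A := fun i => x (a + (i : ℤ))

lemma shift_pow_mem {X : Set (ℤ → A)} (hX : shift '' X = X) {x : ℤ → A} (hx : x ∈ X)
    (a : ℤ) : (fun i => x (i + a)) ∈ X := by
  induction a using Int.induction_on with
  | zero => simpa using hx
  | succ a ih =>
      have h : (fun i : ℤ => x (i + ((a : ℤ) + 1))) = shift (fun i => x (i + a)) := by
        funext i; simp only [shift]; ring_nf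
      rw [h, ← hX]
      exact Set.mem_image_of_mem _ ih
  | pred a ih =>
      have h2 : (fun i : ℤ => x (i + (-(a : ℤ)))) ∈ shift '' X := by rw [hX]; exact ih
      obtain ⟨z, hz, hze⟩ := h2
      have h : z = fun i : ℤ => x (i + (-(a : ℤ) - 1)) := by
        funext i
        have h3 := congrFun hze (i - 1)
        simp only [shift] at h3
        rw [show i - 1 + 1 = i by ring] at h3
        rw [h3]; ring_nf
      rw [← h]; exact hz

lemma win_mem_lang {X : Set (ℤ → A)} (hX : shift '' X = X) {x : ℤ → A} (hx : x ∈ X)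
    (a : ℤ) (k : ℕ) : InLanguage X (win x a k) := by
  refine ⟨fun i => x (i + a), shift_pow_mem hX hx a, fun i => ?_⟩
  show x (0 + (i : ℤ) + a) = x (a + (i : ℤ))
  rw [show (0 : ℤ) + (i : ℤ) + a = a + (i : ℤ) by ring]

/-- `w` occurs in the finite word `u` at position `r`. -/
def OccAt {m k : ℕ} (w : Fin m → A) (u : Fin k → A) (r : ℕ) : Prop :=
  ∃ h : r + m ≤ k, ∀ i : Fin m, u ⟨r + (i : ℕ), by have := i.isLt; omega⟩ = w i

lemma occAt_win {m : ℕ} {y : ℤ → A} {w : Fin m → A} {a : ℤ} {k r : ℕ} :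
    OccAt w (win y a k) r ↔ (r + m ≤ k ∧ OccursAt y w (a + r)) := by
  constructor
  · rintro ⟨h, hi⟩
    refine ⟨h, fun i => ?_⟩
    have h2 := hi i
    show y (a + (r : ℤ) + (i : ℤ)) = w i
    rwa [show a + (r : ℤ) + (i : ℤ) = a + ((r + (i : ℕ) : ℕ) : ℤ) by push_cast; ring]
  · rintro ⟨h, ho⟩
    refine ⟨h, fun i => ?_⟩
    have h2 := ho i
    show y (a + ((r + (i : ℕ) : ℕ) : ℤ)) = w i
    rwa [show a + ((r + (i : ℕ) : ℕ) : ℤ) = a + (r : ℤ) + (i : ℤ) by push_cast; ring]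

lemma not_in_forbid {m k : ℕ} {X : Set (ℤ → A)} {w : Fin m → A} {u : Fin k → A}
    (h : ∃ r, OccAt w u r) : ¬ InLanguage (Forbid X w) u := by
  rintro ⟨y, ⟨hyX, hyf⟩, hocc⟩
  obtain ⟨r, hr, hi⟩ := h
  apply hyf (r : ℤ)
  intro i
  have h2 := hocc ⟨r + (i : ℕ), by have := i.isLt; omega⟩
  rw [hi i] at h2
  show y ((r : ℤ) + (i : ℤ)) = w i
  rwa [show (r : ℤ) + (i : ℤ) = 0 + ((r + (i : ℕ) : ℕ) : ℤ) by push_cast; ring]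

set_option linter.unusedSectionVars false

section MH
variable [Finite A] (x : ℤ → A)

/-- set of windows of length k occurring in x -/
def R (k : ℕ) : Set (Fin k → A) := Set.range fun a : ℤ => win x a k

lemma drop_last (a : ℤ) (k : ℕ) :
    (fun i : Fin k => win x a (k + 1) i.castSucc) = win x a k := by
  funext i; simp [win]

lemma drop_first (a : ℤ) (k : ℕ) :
    (fun i : Fin k => win x a (k + 1) i.succ) = win x (a + 1) k := by
  funext i
  show x (a + ((i : ℕ) + 1 : ℕ)) = x (a + 1 + (i : ℤ))
  congr 1; push_cast; ring

lemma image_dropLast (k : ℕ) :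
    (fun (u : Fin (k+1) → A) (i : Fin k) => u i.castSucc) '' R x (k + 1) = R x k := by
  unfold R
  rw [← Set.range_comp]
  exact congrArg Set.range (funext fun a => drop_last x a k)

lemma image_dropFirst (k : ℕ) :
    (fun (u : Fin (k+1) → A) (i : Fin k) => u i.succ) '' R x (k + 1) = R x k := by
  unfold R
  rw [← Set.range_comp]
  have h : ((fun (u : Fin (k+1) → A) (i : Fin k) => u i.succ) ∘ fun a : ℤ => win x a (k+1))
      = fun a : ℤ => win x (a + 1) k := funext fun a => drop_first x a k
  rw [h]
  ext u
  constructor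
  · rintro ⟨a, rfl⟩; exact ⟨a + 1, rfl⟩
  · rintro ⟨a, rfl⟩; exact ⟨a - 1, by show win x (a - 1 + 1) k = win x a k; rw [show a - 1 + 1 = a by ring]⟩

lemma ncard_R_mono (k : ℕ) : (R x k).ncard ≤ (R x (k + 1)).ncard := by
  rw [← image_dropLast]
  exact Set.ncard_image_le (Set.toFinite _)

lemma ncard_R_zero : (R x 0).ncard = 1 := by
  rw [Set.ncard_eq_one]
  exact ⟨win x 0 0, by
    ext u
    simp only [R, Set.mem_range, Set.mem_singleton_iff]
    constructor
    · rintro ⟨a, rfl⟩; exact Subsingleton.elim _ _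
    · rintro rfl; exact ⟨0, rfl⟩⟩

lemma plateau (n : ℕ) (h : (R x n).ncard ≤ n) :
    ∃ k, k < n ∧ (R x (k + 1)).ncard ≤ (R x k).ncard := by
  by_contra hc
  push_neg at hc
  have key : ∀ k, k ≤ n → k + 1 ≤ (R x k).ncard := by
    intro k
    induction k with
    | zero => intro _; simp [ncard_R_zero]
    | succ k ih =>
        intro hk
        have h1 := ih (by omega)
        have h2 := hc k (by omega)
        omega
  have := key n le_rfl
  omega

lemma mh (hap : IsAperiodic x) (n : ℕ) : n + 1 ≤ (R x n).ncard := by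
  by_contra h
  push_neg at h
  obtain ⟨k, hk, hple⟩ := plateau x n (by omega)
  have hfin : (R x (k + 1)).Finite := Set.toFinite _
  have hcards : (R x k).ncard = (R x (k + 1)).ncard := le_antisymm (ncard_R_mono x k) hple
  have e1 : ((fun (u : Fin (k+1) → A) (i : Fin k) => u i.castSucc) '' R x (k+1)).ncard
      = (R x (k+1)).ncard := by rw [image_dropLast, hcards]
  have e2 : ((fun (u : Fin (k+1) → A) (i : Fin k) => u i.succ) '' R x (k+1)).ncard
      = (R x (k+1)).ncard := by rw [image_dropFirst, hcards]
  have inj1 := Set.injOn_of_ncard_image_eq e1 hfin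
  have inj2 := Set.injOn_of_ncard_image_eq e2 hfin
  have step_up : ∀ a b : ℤ, win x a k = win x b k → win x a (k+1) = win x b (k+1) := by
    intro a b hab
    apply inj1 ⟨a, rfl⟩ ⟨b, rfl⟩
    show (fun i : Fin k => win x a (k+1) i.castSucc) = fun i : Fin k => win x b (k+1) i.castSucc
    rw [drop_last, drop_last, hab]
  have step_down : ∀ a b : ℤ, win x (a+1) k = win x (b+1) k →
      win x a (k+1) = win x b (k+1) := by
    intro a b hab
    apply inj2 ⟨a, rfl⟩ ⟨b, rfl⟩
    show (fun i : Fin k => win x a (k+1) i.succ) = fun i : Fin k => win x b (k+1) i.succ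
    rw [drop_first, drop_first, hab]
  have shrink_r : ∀ a b : ℤ, win x a (k+1) = win x b (k+1) →
      win x (a+1) k = win x (b+1) k := by
    intro a b hab
    rw [← drop_first x a k, ← drop_first x b k, hab]
  have shrink_l : ∀ a b : ℤ, win x a (k+1) = win x b (k+1) → win x a k = win x b k := by
    intro a b hab
    rw [← drop_last x a k, ← drop_last x b k, hab]
  obtain ⟨a, b, hab, hwin⟩ := Finite.exists_ne_map_eq_of_infinite (fun a : ℤ => win x a k)
  have claim : ∀ c : ℤ, win x (a + c) (k+1) = win x (b + c) (k+1) := by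
    intro c
    induction c using Int.induction_on with
    | zero =>
        have := step_up a b hwin
        simpa using this
    | succ c ih =>
        have h1 := shrink_r _ _ ih
        have h2 := step_up _ _ h1
        rw [show a + ((c : ℤ) + 1) = a + c + 1 by ring, show b + ((c : ℤ) + 1) = b + c + 1 by ring]
        exact h2
    | pred c ih =>
        have h1 := shrink_l _ _ ih
        have h2 := step_down (a + -(c : ℤ) - 1) (b + -(c : ℤ) - 1) (by
          rw [show a + -(c : ℤ) - 1 + 1 = a + -(c : ℤ) by ring,
              show b + -(c : ℤ) - 1 + 1 = b + -(c : ℤ) by ring]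
          exact h1)
        rw [show a + (-(c : ℤ) - 1) = a + -(c : ℤ) - 1 by ring,
            show b + (-(c : ℤ) - 1) = b + -(c : ℤ) - 1 by ring]
        exact h2
  have hper : ∀ t : ℤ, x (t + (b - a)) = x t := by
    intro t
    have h0 : x (a + (t - a) + ((0 : ℕ) : ℤ)) = x (b + (t - a) + ((0 : ℕ) : ℤ)) :=
      congrFun (claim (t - a)) ⟨0, Nat.succ_pos k⟩
    rw [show a + (t - a) + ((0 : ℕ) : ℤ) = t by push_cast; ring,
        show b + (t - a) + ((0 : ℕ) : ℤ) = t + (b - a) by push_cast; ring] at h0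
    exact h0.symm
  rcases lt_trichotomy a b with hlt | heq | hgt
  · exact hap (b - a) (sub_pos.mpr hlt) (funext fun t => hper t)
  · exact hab heq
  · refine hap (a - b) (sub_pos.mpr hgt) (funext fun t => ?_)
    have := hper (t + (a - b))
    rw [show t + (a - b) + (b - a) = t by ring] at this
    exact this.symm

end MH

variable {m' : ℕ} (x : ℤ → A) (w : Fin m' → A) (T : ℕ)

lemma syndetic_right
    (H : ∀ p : ℤ, OccursAt x w p → ∃ q, p < q ∧ q ≤ p + T ∧ OccursAt x w q) :
    ∀ d : ℕ, ∀ p : ℤ, OccursAt x w p → ∀ a : ℤ, p ≤ a → a - p ≤ d →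
      ∃ q, a ≤ q ∧ q ≤ a + T ∧ OccursAt x w q := by
  intro d
  induction d with
  | zero => intro p hp a h1 h2; exact ⟨p, by omega, by omega, hp⟩
  | succ d ih =>
      intro p hp a h1 h2
      rcases eq_or_lt_of_le h1 with heq | hlt
      · exact ⟨p, by omega, by omega, hp⟩
      · obtain ⟨q, hq1, hq2, hq3⟩ := H p hp
        by_cases hqa : a ≤ q
        · exact ⟨q, hqa, by omega, hq3⟩
        · exact ih q hq3 a (by omega) (by omega)

lemma syndetic_left
    (H : ∀ p : ℤ, OccursAt x w p → ∃ q, p - T ≤ q ∧ q < p ∧ OccursAt x w q) :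
    ∀ d : ℕ, ∀ p : ℤ, OccursAt x w p → ∀ a : ℤ, a ≤ p → p - a ≤ d →
      ∃ q, a ≤ q ∧ q ≤ a + T ∧ OccursAt x w q := by
  intro d
  induction d with
  | zero => intro p hp a h1 h2; exact ⟨p, by omega, by omega, hp⟩
  | succ d ih =>
      intro p hp a h1 h2
      by_cases hpa : p ≤ a + T
      · exact ⟨p, h1, hpa, hp⟩
      · obtain ⟨q, hq1, hq2, hq3⟩ := H p hp
        by_cases hqa : q ≤ a + T
        · exact ⟨q, by omega, hqa, hq3⟩
        · exact ih q hq3 a (by omega) (by omega)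

lemma cover (h0 : OccursAt x w 0)
    (Hr : ∀ p : ℤ, OccursAt x w p → ∃ q, p < q ∧ q ≤ p + T ∧ OccursAt x w q)
    (Hl : ∀ p : ℤ, OccursAt x w p → ∃ q, p - T ≤ q ∧ q < p ∧ OccursAt x w q) :
    ∀ a : ℤ, ∃ q, a ≤ q ∧ q ≤ a + T ∧ OccursAt x w q := by
  intro a
  rcases le_or_gt a 0 with h | h
  · exact syndetic_left x w T Hl (-a).toNat 0 h0 a h (by omega)
  · exact syndetic_right x w T Hr a.toNat 0 h0 a (by omega) (by omega)


end Lem31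

/-- **Lemma 3.1.** If `(X, σ)` is a subshift, `w ∈ L(X)`, and the cylinder set `[w]₀⁺ ∩ X`
contains an aperiodic point, then for all `n ≥ |w|` we have
`P_{X(w)}(n) ≤ P_X(n) − (n − |w| + 1)`. -/
theorem complexity_forbid_le {A : Type*} [Fintype A] [TopologicalSpace A] [DiscreteTopology A]
    (X : Set (ℤ → A)) (hX_cl : IsClosed X) (hX_inv : shift '' X = X)
    {m : ℕ} (w : Fin m → A) (hw : InLanguage X w)
    (hap : ∃ x ∈ X, OccursAt x w 0 ∧ IsAperiodic x)
    (n : ℕ) (hn : m ≤ n) :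
    complexity (Forbid X w) n + (n - m + 1) ≤ complexity X n := by
  classical
  obtain ⟨x, hxX, hx0, hxap⟩ := hap
  set T : ℕ := n - m with hT
  have main : ∀ D : Set (Fin n → A), D ⊆ {u : Fin n → A | InLanguage X u} →
      (∀ u ∈ D, ∃ r, Lem31.OccAt w u r) → T + 1 ≤ D.ncard →
      complexity (Forbid X w) n + (T + 1) ≤ complexity X n := by
    intro D hD1 hD2 hD3
    have hdisj : Disjoint {u : Fin n → A | InLanguage (Forbid X w) u} D := by
      rw [Set.disjoint_left]
      intro u hu hud
      exact Lem31.not_in_forbid (hD2 u hud) hu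
    have hsub : {u : Fin n → A | InLanguage (Forbid X w) u} ∪ D
        ⊆ {u : Fin n → A | InLanguage X u} := by
      rintro u (hu | hu)
      · obtain ⟨y, hy, ho⟩ := hu
        exact ⟨y, hy.1, ho⟩
      · exact hD1 hu
    have h1 : complexity (Forbid X w) n + (T + 1)
        ≤ ({u : Fin n → A | InLanguage (Forbid X w) u} ∪ D).ncard := by
      rw [Set.ncard_union_eq hdisj (Set.toFinite _) (Set.toFinite _)]
      exact Nat.add_le_add_left hD3 _
    exact le_trans h1 (Set.ncard_le_ncard hsub (Set.toFinite _))
  by_cases C1 : ∃ p : ℤ, OccursAt x w p ∧ ∀ q : ℤ, p < q → q ≤ p + T → ¬ OccursAt x w q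
  · obtain ⟨p, hp, hgap⟩ := C1
    set y : ℤ → A := fun i => x (i + p) with hy
    have hyX : y ∈ X := Lem31.shift_pow_mem hX_inv hxX p
    have hy0 : OccursAt y w 0 := by
      intro i
      show x (0 + (i : ℤ) + p) = w i
      rw [show (0 : ℤ) + (i : ℤ) + p = p + (i : ℤ) by ring]
      exact hp i
    have hyno : ∀ r : ℤ, 0 < r → r ≤ (T : ℤ) → ¬ OccursAt y w r := by
      intro r h1 h2 hocc
      refine hgap (p + r) (by omega) (by omega) (fun i => ?_)
      have h3 := hocc i
      show x (p + r + (i : ℤ)) = w i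
      rw [show p + r + (i : ℤ) = r + (i : ℤ) + p by ring]
      exact h3
    have hkey : ∀ j j' : Fin (T + 1), (j : ℕ) < (j' : ℕ) →
        Lem31.win y (-((j : ℕ) : ℤ)) n ≠ Lem31.win y (-((j' : ℕ) : ℤ)) n := by
      intro j j' hlt heq
      have h1 : Lem31.OccAt w (Lem31.win y (-((j' : ℕ) : ℤ)) n) (j' : ℕ) := by
        refine Lem31.occAt_win.mpr ⟨by have := j'.isLt; omega, ?_⟩
        rw [show -((j' : ℕ) : ℤ) + ((j' : ℕ) : ℤ) = 0 by ring]
        exact hy0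
      rw [← heq] at h1
      obtain ⟨-, h2⟩ := Lem31.occAt_win.mp h1
      exact hyno (-((j : ℕ) : ℤ) + ((j' : ℕ) : ℤ))
        (by omega) (by have := j'.isLt; omega) h2
    have hinj : Function.Injective
        (fun j : Fin (T + 1) => Lem31.win y (-((j : ℕ) : ℤ)) n) := by
      intro j j' hjj
      rcases lt_trichotomy (j : ℕ) (j' : ℕ) with h | h | h
      · exact absurd hjj (hkey j j' h)
      · exact Fin.ext h
      · exact absurd hjj.symm (hkey j' j h)
    refine main (Set.range fun j : Fin (T + 1) => Lem31.win y (-((j : ℕ) : ℤ)) n) ?_ ?_ ?_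
    · rintro u ⟨j, rfl⟩
      exact Lem31.win_mem_lang hX_inv hyX _ n
    · rintro u ⟨j, rfl⟩
      refine ⟨(j : ℕ), Lem31.occAt_win.mpr ⟨by have := j.isLt; omega, ?_⟩⟩
      rw [show -((j : ℕ) : ℤ) + ((j : ℕ) : ℤ) = 0 by ring]
      exact hy0
    · rw [← Set.image_univ, Set.ncard_image_of_injective _ hinj, Set.ncard_univ]
      simp
  · by_cases C2 : ∃ p : ℤ, OccursAt x w p ∧ ∀ q : ℤ, p - T ≤ q → q < p → ¬ OccursAt x w q
    · obtain ⟨p, hp, hgap⟩ := C2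
      set y : ℤ → A := fun i => x (i + p) with hy
      have hyX : y ∈ X := Lem31.shift_pow_mem hX_inv hxX p
      have hy0 : OccursAt y w 0 := by
        intro i
        show x (0 + (i : ℤ) + p) = w i
        rw [show (0 : ℤ) + (i : ℤ) + p = p + (i : ℤ) by ring]
        exact hp i
      have hyno : ∀ r : ℤ, -(T : ℤ) ≤ r → r < 0 → ¬ OccursAt y w r := by
        intro r h1 h2 hocc
        refine hgap (p + r) (by omega) (by omega) (fun i => ?_)
        have h3 := hocc i
        show x (p + r + (i : ℤ)) = w i
        rw [show p + r + (i : ℤ) = r + (i : ℤ) + p by ring]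
        exact h3
      have hkey : ∀ j j' : Fin (T + 1), (j : ℕ) < (j' : ℕ) →
          Lem31.win y (-((j : ℕ) : ℤ)) n ≠ Lem31.win y (-((j' : ℕ) : ℤ)) n := by
        intro j j' hlt heq
        have h1 : Lem31.OccAt w (Lem31.win y (-((j : ℕ) : ℤ)) n) (j : ℕ) := by
          refine Lem31.occAt_win.mpr ⟨by have := j.isLt; omega, ?_⟩
          rw [show -((j : ℕ) : ℤ) + ((j : ℕ) : ℤ) = 0 by ring]
          exact hy0
        rw [heq] at h1
        obtain ⟨-, h2⟩ := Lem31.occAt_win.mp h1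
        exact hyno (-((j' : ℕ) : ℤ) + ((j : ℕ) : ℤ))
          (by have := j'.isLt; omega) (by omega) h2
      have hinj : Function.Injective
          (fun j : Fin (T + 1) => Lem31.win y (-((j : ℕ) : ℤ)) n) := by
        intro j j' hjj
        rcases lt_trichotomy (j : ℕ) (j' : ℕ) with h | h | h
        · exact absurd hjj (hkey j j' h)
        · exact Fin.ext h
        · exact absurd hjj.symm (hkey j' j h)
      refine main (Set.range fun j : Fin (T + 1) => Lem31.win y (-((j : ℕ) : ℤ)) n) ?_ ?_ ?_
      · rintro u ⟨j, rfl⟩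
        exact Lem31.win_mem_lang hX_inv hyX _ n
      · rintro u ⟨j, rfl⟩
        refine ⟨(j : ℕ), Lem31.occAt_win.mpr ⟨by have := j.isLt; omega, ?_⟩⟩
        rw [show -((j : ℕ) : ℤ) + ((j : ℕ) : ℤ) = 0 by ring]
        exact hy0
      · rw [← Set.image_univ, Set.ncard_image_of_injective _ hinj, Set.ncard_univ]
        simp
    · push_neg at C1 C2
      refine main (Set.range fun a : ℤ => Lem31.win x a n) ?_ ?_ ?_
      · rintro u ⟨a, rfl⟩
        exact Lem31.win_mem_lang hX_inv hxX a n
      · rintro u ⟨a, rfl⟩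
        obtain ⟨q, hq1, hq2, hq3⟩ := Lem31.cover x w T hx0 C1 C2 a
        refine ⟨(q - a).toNat, Lem31.occAt_win.mpr ⟨by omega, ?_⟩⟩
        rw [show a + (((q - a).toNat : ℕ) : ℤ) = q by omega]
        exact hq3
      · have hm := Lem31.mh x hxap n
        unfold Lem31.R at hm
        omega
end

section
/- Let d, N ∈ ℕ and let (X,σ) be a subshift with P_X(n) ≤ n^d for all n ≥ N. For each n define k_n := min{k ∈ ℕ : no word w ∈ L_n(X) extends uniquely k times to the right and left}. Then there exists C > 0 (which can be taken to be log 2/(4d)) such that for all n ≥ N there exists m ≤ n·log n satisfying k_m ≥ Cn. -/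
open Filter Topology Pointwise

section Helpers

variable {A : Type*} [Fintype A] {X : Set (ℤ → A)}

lemma shift_mem (hX : shift '' X = X) {x : ℤ → A} (hx : x ∈ X) : shift x ∈ X := by
  rw [← hX]; exact ⟨x, hx, rfl⟩

lemma shift_pre (hX : shift '' X = X) {x : ℤ → A} (hx : x ∈ X) (L : ℕ) :
    ∃ y ∈ X, ∀ i : ℤ, y (i + L) = x i := by
  induction L with
  | zero => exact ⟨x, hx, fun i => by simp⟩
  | succ L ih =>
    obtain ⟨y, hy, hyx⟩ := ih
    have : y ∈ shift '' X := by rw [hX]; exact hy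
    obtain ⟨z, hz, hzy⟩ := this
    refine ⟨z, hz, fun i => ?_⟩
    have h1 : z (i + L + 1) = y (i + L) := congrFun hzy (i + L)
    rw [← hyx i, ← h1]
    push_cast
    ring_nf

lemma shift_iterate_apply (x : ℤ → A) (k : ℕ) (i : ℤ) :
    (shift^[k] x) i = x (i + k) := by
  induction k generalizing x with
  | zero => simp
  | succ k ih =>
    rw [Function.iterate_succ_apply, ih]
    show x (i + k + 1) = x (i + (k + 1 : ℕ))
    push_cast; ring_nf

lemma shift_iterate_mem (hX : shift '' X = X) {x : ℤ → A} (hx : x ∈ X) (k : ℕ) :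
    shift^[k] x ∈ X := by
  induction k with
  | zero => simpa
  | succ k ih => rw [Function.iterate_succ_apply']; exact shift_mem hX ih

/-- Every word in the language extends (both sides) to a word in the language. -/
lemma exists_extension (hX : shift '' X = X) {m : ℕ} {w : Fin m → A}
    (hw : InLanguage X w) (k : ℕ) :
    ∃ u : Fin (m + 2 * k) → A, InLanguage X u ∧
      ∀ i : Fin m, u ⟨k + (i : ℕ), by have := i.isLt; omega⟩ = w i := by
  obtain ⟨x, hx, hocc⟩ := hw
  obtain ⟨y, hy, hyx⟩ := shift_pre hX hx k
  refine ⟨fun j => y (j : ℤ), ⟨y, hy, fun i => by simp⟩, fun i => ?_⟩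
  have h1 : y ((i : ℤ) + k) = x i := hyx i
  have h2 : x (0 + (i : ℤ)) = w i := hocc i
  show y ((⟨k + (i : ℕ), _⟩ : Fin (m + 2 * k)) : ℤ) = w i
  rw [show ((⟨k + (i : ℕ), by have := i.isLt; omega⟩ : Fin (m + 2 * k)) : ℤ) = (i : ℤ) + k by
    push_cast; ring, h1, ← h2]
  ring_nf

/-- The middle restriction of a language word is a language word. -/
lemma middle_in_language (hX : shift '' X = X) {m k : ℕ} {u : Fin (m + 2 * k) → A}
    (hu : InLanguage X u) :
    InLanguage X (fun i : Fin m => u ⟨k + (i : ℕ), by have := i.isLt; omega⟩) := by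
  obtain ⟨x, hx, hocc⟩ := hu
  refine ⟨shift^[k] x, shift_iterate_mem hX hx k, fun i => ?_⟩
  have := hocc ⟨k + (i : ℕ), by have := i.isLt; omega⟩
  show shift^[k] x (0 + (i : ℤ)) = u ⟨k + (i : ℕ), by have := i.isLt; omega⟩
  rw [shift_iterate_apply, ← this]
  congr 1
  push_cast
  ring

lemma complexity_mono (hX : shift '' X = X) {m m' : ℕ} (h : m ≤ m') :
    complexity X m ≤ complexity X m' := by
  classical
  set r : (Fin m' → A) → (Fin m → A) := fun u i => u ⟨(i : ℕ), lt_of_lt_of_le i.isLt h⟩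
  have hsub : {w : Fin m → A | InLanguage X w} ⊆ r '' {u : Fin m' → A | InLanguage X u} := by
    intro w hw
    obtain ⟨x, hx, hocc⟩ := hw
    refine ⟨fun j => x (j : ℤ), ⟨x, hx, fun i => by simp⟩, ?_⟩
    funext i
    simpa using hocc i
  calc complexity X m ≤ (r '' {u : Fin m' → A | InLanguage X u}).ncard :=
        Set.ncard_le_ncard hsub (Set.toFinite _)
    _ ≤ complexity X m' := Set.ncard_image_le (Set.toFinite _)

end Helpers

section Doubling

variable {A : Type*} [Fintype A] {X : Set (ℤ → A)}

lemma complexity_zero (hX_ne : X.Nonempty) : complexity X 0 = 1 := by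
  obtain ⟨x, hx⟩ := hX_ne
  have h : {w : Fin 0 → A | InLanguage X w} = Set.univ := by
    ext w
    simp only [Set.mem_setOf_eq, Set.mem_univ, iff_true]
    exact ⟨x, hx, fun i => i.elim0⟩
  rw [complexity, h, Set.ncard_univ, Nat.card_eq_one_iff_unique]
  exact ⟨inferInstance, inferInstance⟩

lemma doubling (hX_ne : X.Nonempty) (hX : shift '' X = X) (m k : ℕ)
    (h : ∀ w : Fin m → A, InLanguage X w → ¬ ExtendsUniquely X w k) :
    2 * complexity X m ≤ complexity X (m + 2 * k) := by
  classical
  have hA : Nonempty A := ⟨hX_ne.choose 0⟩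
  -- for each language word of length m, two distinct extensions
  have H : ∀ w : Fin m → A, ∃ p : ((Fin (m + 2 * k) → A) × (Fin (m + 2 * k) → A)),
      InLanguage X w → p.1 ≠ p.2 ∧
        (InLanguage X p.1 ∧ ∀ i : Fin m, p.1 ⟨k + (i : ℕ), by have := i.isLt; omega⟩ = w i) ∧
        (InLanguage X p.2 ∧ ∀ i : Fin m, p.2 ⟨k + (i : ℕ), by have := i.isLt; omega⟩ = w i) := by
    intro w
    by_cases hw : InLanguage X w
    · obtain ⟨u₀, hu₀, hmid₀⟩ := exists_extension hX hw k
      have hne := h w hw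
      rw [ExtendsUniquely] at hne
      have : ∃ u₁, (InLanguage X u₁ ∧
          ∀ i : Fin m, u₁ ⟨k + (i : ℕ), by have := i.isLt; omega⟩ = w i) ∧ u₁ ≠ u₀ := by
        by_contra hcon
        push_neg at hcon
        exact hne ⟨u₀, ⟨hu₀, hmid₀⟩, fun y hy => hcon y hy⟩
      obtain ⟨u₁, ⟨hu₁, hmid₁⟩, hne₁⟩ := this
      exact ⟨(u₀, u₁), fun _ => ⟨Ne.symm hne₁, ⟨hu₀, hmid₀⟩, ⟨hu₁, hmid₁⟩⟩⟩
    · exact ⟨(Classical.arbitrary _, Classical.arbitrary _), fun hw' => absurd hw' hw⟩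
  choose P hP using H
  set s : Finset (Fin m → A) :=
    (Set.toFinite {w : Fin m → A | InLanguage X w}).toFinset with hs
  set t : Finset (Fin (m + 2 * k) → A) :=
    (Set.toFinite {u : Fin (m + 2 * k) → A | InLanguage X u}).toFinset with ht
  have hmem_s : ∀ w, w ∈ s ↔ InLanguage X w := by
    intro w; rw [hs, Set.Finite.mem_toFinset]; rfl
  have hmem_t : ∀ u, u ∈ t ↔ InLanguage X u := by
    intro u; rw [ht, Set.Finite.mem_toFinset]; rfl
  have hsub : s.biUnion (fun w => {(P w).1, (P w).2}) ⊆ t := by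
    intro u hu
    simp only [Finset.mem_biUnion, Finset.mem_insert, Finset.mem_singleton] at hu
    obtain ⟨w, hw, hu⟩ := hu
    obtain ⟨_, ⟨h1, _⟩, ⟨h2, _⟩⟩ := hP w ((hmem_s w).1 hw)
    rcases hu with rfl | rfl
    · exact (hmem_t _).2 h1
    · exact (hmem_t _).2 h2
  have hdisj : ∀ w ∈ s, ∀ w' ∈ s, w ≠ w' →
      Disjoint ({(P w).1, (P w).2} : Finset _) {(P w').1, (P w').2} := by
    intro w hw w' hw' hne
    obtain ⟨_, ⟨_, hm1⟩, ⟨_, hm2⟩⟩ := hP w ((hmem_s w).1 hw)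
    obtain ⟨_, ⟨_, hm1'⟩, ⟨_, hm2'⟩⟩ := hP w' ((hmem_s w').1 hw')
    rw [Finset.disjoint_left]
    intro u hu hu'
    have heq : w = w' := by
      funext i
      simp only [Finset.mem_insert, Finset.mem_singleton] at hu hu'
      have e1 : u ⟨k + (i : ℕ), by have := i.isLt; omega⟩ = w i := by
        rcases hu with rfl | rfl
        · exact hm1 i
        · exact hm2 i
      have e2 : u ⟨k + (i : ℕ), by have := i.isLt; omega⟩ = w' i := by
        rcases hu' with rfl | rfl
        · exact hm1' i
        · exact hm2' i
      rw [← e1, e2]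
    exact hne heq
  have hcard : (s.biUnion (fun w => {(P w).1, (P w).2})).card = 2 * s.card := by
    rw [Finset.card_biUnion hdisj]
    rw [Finset.sum_congr rfl (fun w hw => Finset.card_pair (hP w ((hmem_s w).1 hw)).1)]
    simp [mul_comm]
  have hle := Finset.card_le_card hsub
  rw [hcard] at hle
  have e1 : complexity X m = s.card :=
    Set.ncard_eq_toFinset_card _ _
  have e2 : complexity X (m + 2 * k) = t.card :=
    Set.ncard_eq_toFinset_card _ _
  omega

end Doubling

section Grow

variable {A : Type*} [Fintype A] {X : Set (ℤ → A)}

lemma grow (hX_ne : X.Nonempty) (hX : shift '' X = X) (r Bd : ℝ) (hr : 0 ≤ r)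
    (H : ∀ m : ℕ, (m : ℝ) ≤ Bd → ∃ k : ℕ, 0 < k ∧
      (∀ w : Fin m → A, InLanguage X w → ¬ ExtendsUniquely X w k) ∧ 2 * (k : ℝ) < r) :
    ∀ t : ℕ, r * t ≤ Bd → ∃ m : ℕ, (m : ℝ) ≤ r * t ∧ 2 ^ t ≤ complexity X m := by
  intro t
  induction t with
  | zero =>
    intro _
    exact ⟨0, by simp, by rw [complexity_zero hX_ne]; norm_num⟩
  | succ t ih =>
    intro hbd
    have hstep : r * t ≤ r * (t + 1 : ℕ) := by
      push_cast
      nlinarith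
    have ht : r * t ≤ Bd := le_trans hstep hbd
    obtain ⟨m, hm, hcm⟩ := ih ht
    obtain ⟨k, hk, hkw, hkr⟩ := H m (hm.trans ht)
    have hdb := doubling hX_ne hX m k hkw
    refine ⟨m + 2 * k, ?_, ?_⟩
    · push_cast
      push_cast at hm
      nlinarith
    · calc (2 : ℕ) ^ (t + 1) = 2 * 2 ^ t := by ring
        _ ≤ 2 * complexity X m := by omega
        _ ≤ complexity X (m + 2 * k) := hdb

lemma two_log_lt {x : ℝ} (hx : 4 ≤ x) : 2 * Real.log x < x := by
  have hs : Real.sqrt x ^ 2 = x := Real.sq_sqrt (by linarith)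
  have hs1 : 2 ≤ Real.sqrt x := by
    nlinarith [Real.sqrt_nonneg x, hs]
  have hlog : Real.log (Real.sqrt x) < Real.sqrt x - 1 :=
    Real.log_lt_sub_one_of_pos (by linarith) (by linarith)
  have hlx : Real.log x = 2 * Real.log (Real.sqrt x) := by
    rw [Real.log_sqrt (by linarith)]; ring
  nlinarith

end Grow

set_option maxHeartbeats 1000000 in
/-- **Lemma 3.3.** Let `d, N ∈ ℕ` and suppose `(X, σ)` is a subshift with `P_X(n) ≤ n^d`
for all `n ≥ N`.  Let `k_m` be the least positive `k` such that no word of length `m` in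
the language of `X` extends uniquely `k` times to the right and left.  Then there exists
`C > 0` (which can be taken to be `log 2 / (4d)`) such that for all `n ≥ N` there exists
`m ≤ n log n` with `k_m ≥ Cn` (i.e. every positive `k` such that no word of length `m`
extends uniquely `k` times satisfies `k ≥ Cn`). -/
theorem exists_word_extending_uniquely {A : Type*} [Fintype A] [TopologicalSpace A]
    [DiscreteTopology A] (d N : ℕ) (hd : 0 < d) (hN : 0 < N)
    (X : Set (ℤ → A)) (hX_ne : X.Nonempty) (hX_cl : IsClosed X) (hX_inv : shift '' X = X)
    (hP : ∀ n : ℕ, N ≤ n → complexity X n ≤ n ^ d) :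
    ∃ C : ℝ, 0 < C ∧ C = Real.log 2 / (4 * d) ∧
      ∀ n : ℕ, N ≤ n → ∃ m : ℕ, (m : ℝ) ≤ (n : ℝ) * Real.log n ∧
        ∀ k : ℕ, 0 < k → (∀ w : Fin m → A, InLanguage X w → ¬ ExtendsUniquely X w k) →
          C * n ≤ (k : ℝ) := by
  have hlog2 : 0 < Real.log 2 := Real.log_pos (by norm_num)
  have hd1 : (1 : ℝ) ≤ d := by exact_mod_cast hd
  set C : ℝ := Real.log 2 / (4 * d) with hC
  have hCpos : 0 < C := by
    apply div_pos hlog2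
    positivity
  refine ⟨C, hCpos, rfl, ?_⟩
  intro n hn
  have hn1 : 1 ≤ n := le_trans hN hn
  have hnpos : (0 : ℝ) < n := by exact_mod_cast hn1
  have hlogn0 : 0 ≤ Real.log n := Real.log_nonneg (by exact_mod_cast hn1)
  by_cases hsmall : C * n ≤ 1
  · refine ⟨0, by push_cast; exact mul_nonneg hnpos.le hlogn0, fun k hk _ => le_trans hsmall ?_⟩
    exact_mod_cast hk
  push_neg at hsmall
  -- then n ≥ 6
  have hn6 : (6 : ℝ) ≤ n := by
    have hlt : Real.log 2 < 0.6931471808 := Real.log_two_lt_d9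
    have h4 : (4 : ℝ) ≤ 4 * d := by linarith
    have : 1 < Real.log 2 / (4 * d) * n := hsmall
    have hnlarge : 4 * (d : ℝ) < Real.log 2 * n := by
      rw [div_mul_eq_mul_div, lt_div_iff₀ (by positivity)] at this
      linarith
    have h5 : (5 : ℝ) < n := by nlinarith
    have : 5 < n := by exact_mod_cast h5
    have : 6 ≤ n := this
    exact_mod_cast this
  have hexpe : Real.exp 1 < (n : ℝ) := lt_of_lt_of_le (by
    calc Real.exp 1 < 2.7182818286 := Real.exp_one_lt_d9
      _ ≤ 6 := by norm_num) hn6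
  have hlog1 : 1 < Real.log n := (Real.lt_log_iff_exp_lt hnpos).2 hexpe
  by_contra hcon
  push_neg at hcon
  -- hcon : ∀ m, (m:ℝ) ≤ n log n → ∃ k, 0 < k ∧ hyp ∧ (k:ℝ) < C * n
  set Bd : ℝ := (n : ℝ) * Real.log n with hBd
  set r : ℝ := 2 * C * n with hr
  have hrpos : 0 < r := by positivity
  set T : ℕ := Nat.floor (Real.log n / (2 * C)) with hT
  have hTle : (T : ℝ) ≤ Real.log n / (2 * C) := Nat.floor_le (by positivity)
  have hTub : r * T ≤ Bd := by
    have := mul_le_mul_of_nonneg_left hTle (le_of_lt hrpos)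
    calc r * T ≤ r * (Real.log n / (2 * C)) := this
      _ = (Real.log n / (2 * C)) * (2 * C) * n := by rw [hr]; ring
      _ = Real.log n * n := by rw [div_mul_cancel₀ _ (by positivity : (2 * C) ≠ 0)]
      _ = Bd := by rw [hBd]; ring
  have H : ∀ m : ℕ, (m : ℝ) ≤ Bd → ∃ k : ℕ, 0 < k ∧
      (∀ w : Fin m → A, InLanguage X w → ¬ ExtendsUniquely X w k) ∧ 2 * (k : ℝ) < r := by
    intro m hm
    obtain ⟨k, hk1, hk2, hk3⟩ := hcon m hm
    exact ⟨k, hk1, hk2, by rw [hr]; linarith⟩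
  obtain ⟨m, hm, hPm⟩ := grow hX_ne hX_inv r Bd (le_of_lt hrpos) H T hTub
  have hmBd : (m : ℝ) ≤ Bd := hm.trans hTub
  set M : ℕ := max m N with hM
  have hcomp : 2 ^ T ≤ M ^ d := by
    calc (2 : ℕ) ^ T ≤ complexity X m := hPm
      _ ≤ complexity X M := complexity_mono hX_inv (le_max_left _ _)
      _ ≤ M ^ d := hP M (le_max_right _ _)
  have hcompR : (2 : ℝ) ^ T ≤ (M : ℝ) ^ d := by exact_mod_cast hcomp
  have hMBd : (M : ℝ) ≤ Bd := by
    rw [hM]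
    push_cast
    apply max_le hmBd
    calc (N : ℝ) ≤ n := by exact_mod_cast hn
      _ = n * 1 := by ring
      _ ≤ Bd := by rw [hBd]; nlinarith
  have hBdpos : 0 < Bd := by rw [hBd]; nlinarith
  have hMd : (M : ℝ) ^ d ≤ Bd ^ d := pow_le_pow_left₀ (by positivity) hMBd d
  -- lower bound for 2^T
  have hTlb : Real.log n / (2 * C) < (T : ℝ) + 1 := Nat.lt_floor_add_one _
  have hexp1 : 2 * (d : ℝ) * Real.log n < ((T + 1 : ℕ) : ℝ) * Real.log 2 := by
    have h := mul_lt_mul_of_pos_right hTlb hlog2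
    have heq : Real.log n / (2 * C) * Real.log 2 = 2 * d * Real.log n := by
      have hdne : ((d : ℝ)) ≠ 0 := by positivity
      have hl2ne : Real.log 2 ≠ 0 := ne_of_gt hlog2
      rw [hC]
      field_simp
      ring
    rw [heq] at h
    push_cast
    linarith
  have hlow : (n : ℝ) ^ (2 * d) < 2 ^ (T + 1) := by
    have e1 : Real.exp (((2 * d : ℕ) : ℝ) * Real.log n) = (n : ℝ) ^ (2 * d) := by
      rw [Real.exp_nat_mul, Real.exp_log hnpos]
    have e2 : Real.exp (((T + 1 : ℕ) : ℝ) * Real.log 2) = (2 : ℝ) ^ (T + 1) := by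
      rw [Real.exp_nat_mul, Real.exp_log two_pos]
    rw [← e1, ← e2]
    apply Real.exp_lt_exp.2
    push_cast
    push_cast at hexp1
    linarith
  have hchain : (n : ℝ) ^ (2 * d) < 2 * Bd ^ d := by
    calc (n : ℝ) ^ (2 * d) < 2 ^ (T + 1) := hlow
      _ = 2 * 2 ^ T := by ring
      _ ≤ 2 * (M : ℝ) ^ d := by linarith
      _ ≤ 2 * Bd ^ d := by linarith
  -- but n^(2d) ≥ (n/log n) * Bd^d > 2 * Bd^d
  set q : ℝ := (n : ℝ) / Real.log n with hq
  have hlogpos : 0 < Real.log n := by linarith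
  have h2q : 2 < q := by
    rw [hq, lt_div_iff₀ hlogpos]
    have := two_log_lt (x := (n : ℝ)) (by linarith)
    linarith
  have hqd : q ≤ q ^ d := le_self_pow₀ (by linarith) hd.ne'
  have heqq : (n : ℝ) ^ (2 * d) = Bd ^ d * q ^ d := by
    rw [← mul_pow, pow_mul]
    congr 1
    rw [hBd, hq]
    field_simp
  have hBdd : 0 < Bd ^ d := by positivity
  nlinarith [mul_lt_mul_of_pos_left h2q hBdd, mul_le_mul_of_nonneg_left hqd (le_of_lt hBdd)]
end

section
/- Let (X,σ) be a subshift and let [σ] denote the full group of σ, i.e. the group of all maps φ: X → X for which there exists k: X → ℤ with φ(x) = σ^{k(x)}(x) for all x ∈ X. Then Aut(X) ∩ [σ], the group of orbit-preserving automorphisms, is a normal abelian subgroup of Aut(X). -/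
open Filter Topology Pointwise

/-- Shift by `k`. -/
def sh {A : Type*} (k : ℤ) (x : ℤ → A) : ℤ → A := fun i => x (i + k)

lemma sh_mem {A : Type*} {X : Set (ℤ → A)} (hX_inv : shift '' X = X) :
    ∀ k : ℤ, ∀ x ∈ X, sh k x ∈ X := by
  intro k
  induction k using Int.induction_on with
  | zero =>
      intro x hx
      have e : sh 0 x = x := by funext i; simp [sh]
      rw [e]; exact hx
  | succ k ih =>
      intro x hx
      have h1 : shift (sh k x) ∈ shift '' X := ⟨_, ih x hx, rfl⟩
      rw [hX_inv] at h1
      convert h1 using 1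
      funext i
      show x (i + ((k : ℤ) + 1)) = x (i + 1 + k)
      ring_nf
  | pred k ih =>
      intro x hx
      have h1 : sh (-k) x ∈ X := ih x hx
      rw [← hX_inv] at h1
      obtain ⟨y, hy, hyx⟩ := h1
      have : sh (-((k : ℤ) + 1)) x = y := by
        funext i
        have h2 := congrFun hyx (i - 1)
        show x (i + -((k : ℤ) + 1)) = y i
        have e1 : i - 1 + 1 = i := by ring
        have e2 : i - 1 + -(k : ℤ) = i + -((k : ℤ) + 1) := by ring
        simpa [shift, sh, e1, e2] using h2.symm
      rw [show -(k : ℤ) - 1 = -((k : ℤ) + 1) by ring, this]; exact hy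

lemma aut_sh_comm {A : Type*} {X : Set (ℤ → A)} (hX_inv : shift '' X = X)
    (φ : Equiv.Perm ↥X)
    (hφ : ∀ x y : ↥X, shift (x : ℤ → A) = (y : ℤ → A) →
      shift ((φ x : ℤ → A)) = ((φ y : ℤ → A))) :
    ∀ k : ℤ, ∀ x y : ↥X, (y : ℤ → A) = sh k (x : ℤ → A) →
      (φ y : ℤ → A) = sh k ((φ x : ℤ → A)) := by
  intro k
  induction k using Int.induction_on with
  | zero =>
      intro x y h
      have : y = x := Subtype.ext (by funext i; simpa [sh] using congrFun h i)
      subst this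
      funext i; simp [sh]
  | succ k ih =>
      intro x y h
      set z : ↥X := ⟨sh k (x : ℤ → A), sh_mem hX_inv k _ x.2⟩ with hz
      have hzy : shift (z : ℤ → A) = (y : ℤ → A) := by
        funext i
        have e : i + 1 + (k : ℤ) = i + ((k : ℤ) + 1) := by ring
        simp [shift, sh, h, e, hz]
      have h1 := hφ z y hzy
      have h2 : (φ z : ℤ → A) = sh k ((φ x : ℤ → A)) := ih x z rfl
      funext i
      have h3 := congrFun h1 i
      have e : i + 1 + (k : ℤ) = i + ((k : ℤ) + 1) := by ring
      simp only [shift, h2, sh, e] at h3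
      simpa [sh] using h3.symm
  | pred k ih =>
      intro x y h
      set z : ↥X := ⟨sh (-(k : ℤ)) (x : ℤ → A), sh_mem hX_inv _ _ x.2⟩ with hz
      have hyz : shift (y : ℤ → A) = (z : ℤ → A) := by
        funext i
        have e : i + 1 + -((k : ℤ) + 1) = i + -(k : ℤ) := by ring
        simp [shift, sh, h, e, hz]
      have h1 := hφ y z hyz
      have h2 : (φ z : ℤ → A) = sh (-(k : ℤ)) ((φ x : ℤ → A)) := ih x z rfl
      funext i
      have h3 := congrFun h1 (i - 1)
      simp only [shift, h2, sh] at h3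
      show (φ y : ℤ → A) i = (φ x : ℤ → A) (i + (-(k : ℤ) - 1))
      convert h3 using 2 <;> ring

/-- The group of orbit-preserving automorphisms `Aut(X) ∩ [σ]` — automorphisms `φ` such
that for every `x` there is `k(x) ∈ ℤ` with `φ(x) = σ^{k(x)}(x)` — is a normal abelian
subgroup of `Aut(X)`. -/
theorem orbitPreserving_normal_abelian {A : Type*} [Fintype A] [TopologicalSpace A]
    [DiscreteTopology A] (X : Set (ℤ → A)) (hX_cl : IsClosed X) (hX_inv : shift '' X = X) :
    ∃ H : Subgroup (Equiv.Perm ↥X),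
      ((H : Set (Equiv.Perm ↥X)) =
        {φ | φ ∈ Aut X ∧ ∀ x : ↥X, ∃ k : ℤ,
          (φ x : ℤ → A) = fun i => (x : ℤ → A) (i + k)}) ∧
      (∀ a ∈ H, ∀ b ∈ H, a * b = b * a) ∧
      (∀ g ∈ Aut X, ∀ h ∈ H, g * h * g⁻¹ ∈ H) := by
  classical
  have comm : ∀ φ : Equiv.Perm ↥X, φ ∈ Aut X → ∀ k : ℤ, ∀ x y : ↥X,
      (y : ℤ → A) = sh k (x : ℤ → A) → (φ y : ℤ → A) = sh k ((φ x : ℤ → A)) := by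
    intro φ hφ
    obtain ⟨_, _, h3, _⟩ := hφ
    exact aut_sh_comm hX_inv φ h3
  let S : Set (Equiv.Perm ↥X) := {φ | φ ∈ Aut X ∧ ∀ x : ↥X, ∃ k : ℤ,
    (φ x : ℤ → A) = fun i => (x : ℤ → A) (i + k)}
  refine ⟨⟨⟨⟨S, ?_⟩, ?_⟩, ?_⟩, rfl, ?_, ?_⟩
  · intro a b ha hb
    obtain ⟨ha, hka⟩ := ha
    obtain ⟨hb, hkb⟩ := hb
    refine ⟨(Aut X).mul_mem ha hb, fun x => ?_⟩
    obtain ⟨m, hm⟩ := hkb x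
    obtain ⟨k, hk⟩ := hka x
    have h1 : (a (b x) : ℤ → A) = sh m ((a x : ℤ → A)) := comm a ha m x (b x) hm
    refine ⟨m + k, ?_⟩
    funext i
    have h2 := congrFun h1 i
    have h3 := congrFun hk (i + m)
    simp only [sh] at h2 h3
    calc ((a * b) x : ℤ → A) i = (a (b x) : ℤ → A) i := rfl
      _ = (a x : ℤ → A) (i + m) := h2
      _ = (x : ℤ → A) (i + m + k) := h3
      _ = (x : ℤ → A) (i + (m + k)) := by ring_nf
  · exact ⟨(Aut X).one_mem, fun x => ⟨0, by funext i; simp⟩⟩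
  · intro a ha
    obtain ⟨ha, hka⟩ := ha
    refine ⟨(Aut X).inv_mem ha, fun x => ?_⟩
    obtain ⟨k, hk⟩ := hka (a⁻¹ x)
    rw [Equiv.Perm.inv_def, Equiv.apply_symm_apply] at hk
    refine ⟨-k, ?_⟩
    funext i
    have h3 := congrFun hk (i - k)
    have e : i - k + k = i := by ring
    rw [e] at h3
    have : ((a⁻¹ : Equiv.Perm ↥X) x : ℤ → A) i = (x : ℤ → A) (i - k) := h3.symm
    rw [show i + -k = i - k by ring]
    exact this
  · rintro a ⟨ha, hka⟩ b ⟨hb, hkb⟩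
    ext x
    obtain ⟨k, hk⟩ := hka x
    obtain ⟨m, hm⟩ := hkb x
    have h1 : (a (b x) : ℤ → A) = sh m ((a x : ℤ → A)) := comm a ha m x (b x) hm
    have h2 : (b (a x) : ℤ → A) = sh k ((b x : ℤ → A)) := comm b hb k x (a x) hk
    have : ((a * b) x : ℤ → A) = ((b * a) x : ℤ → A) := by
      funext i
      calc ((a * b) x : ℤ → A) i = (a (b x) : ℤ → A) i := rfl
        _ = (a x : ℤ → A) (i + m) := congrFun h1 i
        _ = (x : ℤ → A) (i + m + k) := congrFun hk (i + m)
        _ = (x : ℤ → A) (i + k + m) := by ring_nf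
        _ = (b x : ℤ → A) (i + k) := (congrFun hm (i + k)).symm
        _ = (b (a x) : ℤ → A) i := (congrFun h2 i).symm
        _ = ((b * a) x : ℤ → A) i := rfl
    exact congrFun this _
  · rintro g hg h ⟨hh, hkh⟩
    refine ⟨(Aut X).mul_mem ((Aut X).mul_mem hg hh) ((Aut X).inv_mem hg), fun x => ?_⟩
    obtain ⟨k, hk⟩ := hkh (g⁻¹ x)
    have h1 : (g (h (g⁻¹ x)) : ℤ → A) = sh k ((g (g⁻¹ x) : ℤ → A)) :=
      comm g hg k (g⁻¹ x) (h (g⁻¹ x)) hk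
    rw [Equiv.Perm.inv_def, Equiv.apply_symm_apply] at h1
    exact ⟨k, h1⟩
end
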